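/- (Theorem 2, evader side.) Let s be a state with D(s)=d<∞ and let ν* be any DP asynchronous evader policy. Then every asynchronous play from s in which the evader's move at each step equals ν* applied to the current state and the pursuers' chosen move satisfies f(s^t)=0 for all t<d — i.e., ν* avoids being captured in fewer than d steps by every (possibly history-dependent) pursuer strategy. -/

import Mathlib

open scoped ENat

/-- Closed neighborhood `N[v]`: stay at `v` or cross one edge of `G`. -/
def closedNbr {V : Type*} (G : SimpleGraph V) (v : V) : Set V :=
  {u | u = v ∨ G.Adj v u}

/-- Joint pursuer moves: all `m` pursuers move simultaneously, each within a
closed neighborhood. -/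
def jointNbr {V : Type*} (G : SimpleGraph V) {m : ℕ} (sp : Fin m → V) :
    Set (Fin m → V) :=
  {np | ∀ i, np i ∈ closedNbr G (sp i)}

/-- Capture sets `C_k`: `C_0 = {s | f s = 1}` and
`C_{k+1} = C_k ∪ {(s_p,s_e) | ∃ n_p ∈ N[s_p], ∀ n_e ∈ N[s_e], (n_p,n_e) ∈ C_k}`. -/
def captureSet {V : Type*} (G : SimpleGraph V) {m : ℕ}
    (f : (Fin m → V) × V → Bool) : ℕ → Set ((Fin m → V) × V)
  | 0 => {s | f s = true}
  | k + 1 => captureSet G f k ∪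
      {s | ∃ np ∈ jointNbr G s.1, ∀ ne ∈ closedNbr G s.2, (np, ne) ∈ captureSet G f k}

/-- The distance table `D(s) = min {k | s ∈ C_k}` (and `∞` if `s` lies in no `C_k`). -/
noncomputable def Dtab {V : Type*} (G : SimpleGraph V) {m : ℕ}
    (f : (Fin m → V) × V → Bool) (s : (Fin m → V) × V) : ℕ∞ :=
  sInf {k : ℕ∞ | ∃ n : ℕ, k = n ∧ s ∈ captureSet G f n}

/-- A DP asynchronous evader policy: a stationary policy with
`ν*(s_p,s_e,n_p) ∈ argmax_{n_e ∈ N[s_e]} D(n_p,n_e)`. -/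
def IsDPEvaderAsync {V : Type*} (G : SimpleGraph V) {m : ℕ}
    (f : (Fin m → V) × V → Bool)
    (ν : (Fin m → V) × V → (Fin m → V) → V) : Prop :=
  ∀ (s : (Fin m → V) × V) (np : Fin m → V), ν s np ∈ closedNbr G s.2 ∧
    ∀ ne ∈ closedNbr G s.2, Dtab G f (np, ne) ≤ Dtab G f (np, ν s np)

lemma captureSet_mono {V : Type*} (G : SimpleGraph V) {m : ℕ}
    (f : (Fin m → V) × V → Bool) : Monotone (captureSet G f) := by
  apply monotone_nat_of_le_succ
  intro k
  exact Set.subset_union_left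

lemma Dtab_le_iff {V : Type*} (G : SimpleGraph V) {m : ℕ}
    (f : (Fin m → V) × V → Bool) (s : (Fin m → V) × V) (k : ℕ) :
    Dtab G f s ≤ (k : ℕ∞) ↔ s ∈ captureSet G f k := by
  constructor
  · intro h
    by_contra hc
    have h2 : ((k : ℕ∞) + 1) ≤ Dtab G f s := by
      apply le_sInf
      rintro x ⟨n, rfl, hn⟩
      by_contra hx
      push_neg at hx
      have : n ≤ k := by rw [show ((k:ℕ∞)+1) = ((k+1:ℕ):ℕ∞) by push_cast; ring] at hx; exact Nat.lt_succ_iff.mp (by exact_mod_cast hx)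
      exact hc (captureSet_mono G f this hn)
    have := h2.trans h
    have : (k : ℕ∞) + 1 ≤ (k : ℕ∞) := this
    simp [ENat.add_one_le_iff] at this
  · intro h
    exact sInf_le ⟨k, rfl, h⟩

lemma Dtab_zero_of_f {V : Type*} (G : SimpleGraph V) {m : ℕ}
    (f : (Fin m → V) × V → Bool) (s : (Fin m → V) × V) (h : f s = true) :
    Dtab G f s = 0 := by
  have := (Dtab_le_iff G f s 0).mpr (by simpa [captureSet] using h)
  simpa using this

/-- **Theorem 2 (evader side).** If `D(s) = d < ∞` and `ν*` is any DP asynchronous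
evader policy, then every asynchronous play from `s` in which the evader's move at each
step equals `ν*` applied to the current state and the pursuers' chosen move (the
pursuers moving arbitrarily) satisfies `f(s^t) = 0` for all `t < d`. -/
theorem dp_evader_avoids_capture_before_D {V : Type*} [Fintype V] (G : SimpleGraph V)
    (m : ℕ) (hm : 1 ≤ m) (f : (Fin m → V) × V → Bool)
    (ν : (Fin m → V) × V → (Fin m → V) → V) (hν : IsDPEvaderAsync G f ν)
    (s : (Fin m → V) × V) (d : ℕ) (hd : Dtab G f s = (d : ℕ∞))
    (σ : ℕ → (Fin m → V) × V) (h0 : σ 0 = s)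
    (hplay : ∀ t, f (σ t) = false →
      (σ (t + 1)).1 ∈ jointNbr G (σ t).1 ∧ (σ (t + 1)).2 = ν (σ t) ((σ (t + 1)).1)) :
    ∀ t < d, f (σ t) = false := by
  have key : ∀ t, t ≤ d → (d : ℕ∞) ≤ (t : ℕ∞) + Dtab G f (σ t) := by
    intro t
    induction t with
    | zero => intro _; simp [h0, hd]
    | succ t ih =>
      intro ht
      have htd : t < d := Nat.lt_of_succ_le ht
      have ihd := ih (Nat.le_of_lt htd)
      -- f (σ t) = false
      have hf : f (σ t) = false := by
        by_contra hc
        have hc' : f (σ t) = true := by simpa using hc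
        rw [Dtab_zero_of_f G f _ hc'] at ihd
        simp at ihd
        exact absurd (by exact_mod_cast ihd) (Nat.not_le_of_lt htd)
      obtain ⟨hnp, hne⟩ := hplay t hf
      -- step bound : Dtab (σ t) ≤ 1 + Dtab (σ (t+1))
      have hstep : Dtab G f (σ t) ≤ 1 + Dtab G f (σ (t + 1)) := by
        rcases eq_top_or_lt_top (Dtab G f (σ (t + 1))) with htop | hfin
        · rw [htop]; simp
        · obtain ⟨k, hk⟩ := WithTop.ne_top_iff_exists.mp hfin.ne
          have hk' : Dtab G f (σ (t + 1)) = (k : ℕ∞) := hk.symm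
          have hmem : σ (t + 1) ∈ captureSet G f k :=
            (Dtab_le_iff G f _ k).mp hk'.le
          have hall : ∀ ne ∈ closedNbr G (σ t).2,
              ((σ (t + 1)).1, ne) ∈ captureSet G f k := by
            intro ne hne'
            have := (hν (σ t) ((σ (t + 1)).1)).2 ne hne'
            rw [← hne] at this
            have : Dtab G f ((σ (t + 1)).1, ne) ≤ (k : ℕ∞) := by
              calc Dtab G f ((σ (t + 1)).1, ne) ≤ Dtab G f (σ (t + 1)) := by
                    simpa using this
                _ = (k : ℕ∞) := hk'
            exact (Dtab_le_iff G f _ k).mp this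
          have : σ t ∈ captureSet G f (k + 1) :=
            Or.inr ⟨(σ (t + 1)).1, hnp, hall⟩
          have := (Dtab_le_iff G f _ (k + 1)).mpr this
          calc Dtab G f (σ t) ≤ ((k + 1 : ℕ) : ℕ∞) := this
            _ = 1 + Dtab G f (σ (t + 1)) := by rw [hk']; push_cast; ring
      calc (d : ℕ∞) ≤ (t : ℕ∞) + Dtab G f (σ t) := ihd
        _ ≤ (t : ℕ∞) + (1 + Dtab G f (σ (t + 1))) := by
              exact add_le_add_right hstep _
        _ = ((t + 1 : ℕ) : ℕ∞) + Dtab G f (σ (t + 1)) := by push_cast; ring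
  intro t ht
  by_contra hc
  have hc' : f (σ t) = true := by simpa using hc
  have := key t (Nat.le_of_lt ht)
  rw [Dtab_zero_of_f G f _ hc'] at this
  simp at this
  exact absurd (by exact_mod_cast this) (Nat.not_le_of_lt ht)
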